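/- Let F be a Borel probability measure on ℝ^q with bounded Lebesgue density f, and let μ ∈ L²(F) be nonnegative. Define the cube maximal function (Mμ)(x) = sup_{h>0} Ω_μ(x,h)/F(B_∞(x,h)) for x in the support of F (where Ω_μ(x,h) = ∫_{B_∞(x,h)} μ dF). Then lim_{h↓0} h^{−q} E[μ(X)·Ω_μ(X,h)] = 2^q · E[μ²(X) f(X)], where X ∼ F. -/

import Mathlib

open MeasureTheory Metric Set Filter Topology
open scoped ENNReal

/-- Averages over shrinking cubes of a continuous function converge. -/
lemma auxA (q : ℕ) (φ : (Fin q → ℝ) → ℝ) (hφ : Continuous φ) :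
    Tendsto (fun h : ℝ => (∫ u in Metric.closedBall (0 : Fin q → ℝ) h, φ u) / h ^ q)
      (𝓝[>] 0) (𝓝 (2 ^ q * φ 0)) := by
  rw [Metric.tendsto_nhdsWithin_nhds]
  intro ε hε
  have h2q : (0:ℝ) < 2 ^ q + 1 := by positivity
  set ε' : ℝ := ε / (2 ^ q + 1) with hε'def
  have hε' : 0 < ε' := div_pos hε h2q
  obtain ⟨δ, hδ, hδ'⟩ := Metric.continuousAt_iff.1 (hφ.continuousAt (x := (0 : Fin q → ℝ))) ε' hε'
  refine ⟨δ, hδ, fun {h} hh hd => ?_⟩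
  have hh0 : 0 < h := hh
  have hhδ : h < δ := by
    rwa [Real.dist_eq, sub_zero, abs_of_pos hh0] at hd
  set S : Set (Fin q → ℝ) := Metric.closedBall 0 h with hS
  have hvol : volume S = ENNReal.ofReal ((2 * h) ^ q) := by
    rw [hS, Real.volume_pi_closedBall 0 hh0.le, Fintype.card_fin]
  have hvolR : (volume S).toReal = (2 * h) ^ q := by
    rw [hvol, ENNReal.toReal_ofReal (by positivity)]
  have hvolfin : volume S < ∞ := by rw [hvol]; exact ENNReal.ofReal_lt_top
  have hint : IntegrableOn φ S volume :=
    hφ.continuousOn.integrableOn_compact (isCompact_closedBall _ _)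
  have hconst : ∫ u in S, φ 0 ∂volume = (2 * h) ^ q * φ 0 := by
    rw [setIntegral_const, measureReal_def, hvolR, smul_eq_mul]
  have hsplit : (∫ u in S, φ u) - (2 * h) ^ q * φ 0 = ∫ u in S, (φ u - φ 0) := by
    rw [← hconst, integral_sub hint (integrableOn_const hvolfin.ne)]
  have hbound : ‖∫ u in S, (φ u - φ 0)‖ ≤ ε' * (2 * h) ^ q := by
    rw [← hvolR]
    refine norm_setIntegral_le_of_norm_le_const hvolfin (fun u hu => ?_)
    have : dist u 0 < δ := lt_of_le_of_lt (mem_closedBall.1 hu) hhδ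
    exact le_of_lt (by simpa [Real.dist_eq] using hδ' this)
  have hpow : (0:ℝ) < h ^ q := by positivity
  rw [Real.dist_eq]
  have key : |(∫ u in S, φ u) / h ^ q - 2 ^ q * φ 0| ≤ ε' * 2 ^ q := by
    have : (∫ u in S, φ u) / h ^ q - 2 ^ q * φ 0
        = ((∫ u in S, φ u) - (2 * h) ^ q * φ 0) / h ^ q := by
      field_simp
      ring
    rw [this, abs_div, abs_of_pos hpow, div_le_iff₀ hpow, hsplit]
    calc |∫ u in S, (φ u - φ 0)| ≤ ε' * (2 * h) ^ q := hbound
      _ = ε' * 2 ^ q * h ^ q := by rw [mul_pow]; ring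
  refine lt_of_le_of_lt key ?_
  have : ε' * (2 ^ q + 1) = ε := by
    rw [hε'def, div_mul_cancel₀]
    exact ne_of_gt h2q
  calc ε' * 2 ^ q < ε' * (2 ^ q + 1) := by
        exact mul_lt_mul_of_pos_left (lt_add_one _) hε'
    _ = ε := this

/-- Translation of a set integral over a cube. -/
lemma auxB (q : ℕ) (g : (Fin q → ℝ) → ℝ) (x : Fin q → ℝ) (h : ℝ) :
    ∫ y in Metric.closedBall x h, g y ∂volume
      = ∫ u in Metric.closedBall (0 : Fin q → ℝ) h, g (x + u) ∂volume := by
  rw [← integral_indicator (measurableSet_closedBall), ← integral_indicator (measurableSet_closedBall)]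
  rw [← integral_add_left_eq_self (fun y => (Metric.closedBall x h).indicator g y) x]
  refine integral_congr_ae (Filter.Eventually.of_forall fun u => ?_)
  by_cases hu : u ∈ Metric.closedBall (0 : Fin q → ℝ) h
  · have hxu : x + u ∈ Metric.closedBall x h := by
      rw [mem_closedBall, dist_self_add_left]
      simpa [dist_zero_right] using mem_closedBall.1 hu
    simp [Set.indicator_of_mem hxu, Set.indicator_of_mem hu]
  · have hxu : x + u ∉ Metric.closedBall x h := by
      intro hc
      apply hu
      rw [mem_closedBall, dist_self_add_left] at hc
      simpa [mem_closedBall, dist_zero_right] using hc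
    simp [Set.indicator_of_notMem hxu, Set.indicator_of_notMem hu]

theorem stmt18 (q : ℕ) (F : Measure (Fin q → ℝ)) [IsProbabilityMeasure F]
    (f : (Fin q → ℝ) → ℝ) (hf_meas : Measurable f) (hf_nonneg : ∀ x, 0 ≤ f x)
    (C : ℝ) (hf_bdd : ∀ x, f x ≤ C)
    (hF : F = (volume : Measure (Fin q → ℝ)).withDensity (fun x => ENNReal.ofReal (f x)))
    (μ : (Fin q → ℝ) → ℝ) (hμ_nonneg : ∀ x, 0 ≤ μ x) (hμ_L2 : MemLp μ 2 F) :
    Tendsto (fun h : ℝ =>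
        (∫ x, μ x * (∫ y in Metric.closedBall x h, μ y ∂F) ∂F) / h ^ q)
      (𝓝[>] (0 : ℝ)) (𝓝 (2 ^ q * ∫ x, μ x ^ 2 * f x ∂F)) := by
  haveI : Fact ((1:ℝ≥0∞) ≤ 2) := ⟨one_le_two⟩
  have hC0 : (0:ℝ) ≤ C := le_trans (hf_nonneg 0) (hf_bdd 0)
  set μ' : (Fin q → ℝ) → ℝ := hμ_L2.1.mk μ with hμ'def
  have hμ'sm : StronglyMeasurable μ' := hμ_L2.1.stronglyMeasurable_mk
  have hμeq : μ =ᵐ[F] μ' := hμ_L2.1.ae_eq_mk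
  have hfnn : Measurable fun x => (f x).toNNReal := measurable_real_toNNReal.comp hf_meas
  have hFd : F = (volume : Measure (Fin q → ℝ)).withDensity
      (fun x => ((f x).toNNReal : ℝ≥0∞)) := hF
  -- a.e. equality of f*μ and f*μ' w.r.t. volume
  have hae : ∀ᵐ x ∂(volume : Measure (Fin q → ℝ)), ENNReal.ofReal (f x) ≠ 0 → μ x = μ' x := by
    have h1 := hμeq
    rw [hF] at h1
    exact (ae_withDensity_iff hf_meas.ennreal_ofReal).1 h1
  have E0 : (fun x => f x * μ x) =ᵐ[(volume : Measure (Fin q → ℝ))] (fun x => f x * μ' x) := by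
    filter_upwards [hae] with x hx
    by_cases hfx : f x = 0
    · simp [hfx]
    · have : 0 < f x := lt_of_le_of_ne (hf_nonneg x) (Ne.symm hfx)
      rw [hx (by simp [ENNReal.ofReal_eq_zero, not_le, this])]
  set g : (Fin q → ℝ) → ℝ := fun x => f x * μ' x with hgdef
  have hg_meas : Measurable g := hf_meas.mul hμ'sm.measurable
  -- conversion of integrals
  have conv : ∀ (s : Set (Fin q → ℝ)), MeasurableSet s → ∀ ψ : (Fin q → ℝ) → ℝ,
      ∫ y in s, ψ y ∂F = ∫ y in s, f y * ψ y ∂volume := by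
    intro s hs ψ
    rw [hFd, restrict_withDensity hs, integral_withDensity_eq_integral_smul hfnn]
    refine integral_congr_ae (Filter.Eventually.of_forall fun y => ?_)
    show (f y).toNNReal • ψ y = f y * ψ y
    rw [NNReal.smul_def, Real.coe_toNNReal _ (hf_nonneg y), smul_eq_mul]
  have conv' : ∀ ψ : (Fin q → ℝ) → ℝ,
      ∫ y, ψ y ∂F = ∫ y, f y * ψ y ∂volume := by
    intro ψ
    rw [hFd, integral_withDensity_eq_integral_smul hfnn]
    refine integral_congr_ae (Filter.Eventually.of_forall fun y => ?_)
    show (f y).toNNReal • ψ y = f y * ψ y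
    rw [NNReal.smul_def, Real.coe_toNNReal _ (hf_nonneg y), smul_eq_mul]
  -- integrability of g and g^2
  have hμ'L2F : MemLp μ' 2 F := hμ_L2.ae_eq hμeq
  have hgsq_int : Integrable (fun x => g x ^ 2) volume := by
    have h1 : Integrable (fun x => μ' x ^ 2) F := hμ'L2F.integrable_sq
    rw [hFd, integrable_withDensity_iff_integrable_smul hfnn] at h1
    have h2 : Integrable (fun x => f x * μ' x ^ 2) volume := by
      refine h1.congr (Filter.Eventually.of_forall fun x => ?_)
      show (f x).toNNReal • μ' x ^ 2 = f x * μ' x ^ 2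
      rw [NNReal.smul_def, Real.coe_toNNReal _ (hf_nonneg x), smul_eq_mul]
    refine (h2.const_mul C).mono (hg_meas.pow_const 2).aestronglyMeasurable
      (Filter.Eventually.of_forall fun x => ?_)
    have hb : g x ^ 2 ≤ C * (f x * μ' x ^ 2) := by
      rw [hgdef]
      have : (f x * μ' x) ^ 2 = f x * (f x * μ' x ^ 2) := by ring
      rw [this]
      exact mul_le_mul_of_nonneg_right (hf_bdd x)
        (mul_nonneg (hf_nonneg x) (sq_nonneg _))
    have h0 : 0 ≤ g x ^ 2 := sq_nonneg _
    rw [Real.norm_eq_abs, Real.norm_eq_abs, abs_of_nonneg h0]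
    exact le_trans hb (le_abs_self _)
  have hgL2 : MemLp g 2 volume :=
    (memLp_two_iff_integrable_sq hg_meas.aestronglyMeasurable).2 hgsq_int
  have hg_int : Integrable g volume := by
    have h0 : MemLp μ' 1 F := hμ'L2F.mono_exponent (by norm_num)
    have h1 : Integrable μ' F := memLp_one_iff_integrable.1 h0
    rw [hFd, integrable_withDensity_iff_integrable_smul hfnn] at h1
    refine h1.congr (Filter.Eventually.of_forall fun x => ?_)
    show (f x).toNNReal • μ' x = g x
    rw [NNReal.smul_def, Real.coe_toNNReal _ (hf_nonneg x), smul_eq_mul]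
  -- the autocorrelation function φ
  set φ : (Fin q → ℝ) → ℝ := fun u => ∫ x, g x * g (x + u) ∂volume with hφdef
  -- continuity of φ via L² translation continuity
  set G : Lp ℝ 2 (volume : Measure (Fin q → ℝ)) := hgL2.toLp g with hGdef
  set T : (Fin q → ℝ) → C(Fin q → ℝ, Fin q → ℝ) :=
    fun u => ⟨fun x => x + u, continuous_id.add continuous_const⟩ with hTdef
  have hT : ∀ u, MeasurePreserving (T u) volume volume :=
    fun u => measurePreserving_add_right volume u
  have hTcont : Continuous T := by
    refine ContinuousMap.continuous_of_continuous_uncurry _ ?_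
    exact continuous_snd.add continuous_fst
  set Φ : (Fin q → ℝ) → Lp ℝ 2 (volume : Measure (Fin q → ℝ)) :=
    fun u => Lp.compMeasurePreserving (T u) (hT u) G with hΦdef
  have hΦcont : Continuous Φ :=
    Continuous.compMeasurePreservingLp continuous_const hTcont hT (by norm_num)
  have hφu : ∀ u, φ u = (inner ℝ (G : Lp ℝ 2 (volume : Measure (Fin q → ℝ))) (Φ u) : ℝ) := by
    intro u
    rw [MeasureTheory.L2.inner_def]
    have h1 : ⇑G =ᵐ[volume] g := hgL2.coeFn_toLp
    have h2 : ⇑(Φ u) =ᵐ[volume] fun x => g (x + u) := by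
      have h3 : ⇑(Φ u) =ᵐ[volume] (⇑G ∘ T u) := Lp.coeFn_compMeasurePreserving G (hT u)
      have h4 : (⇑G ∘ T u) =ᵐ[volume] (g ∘ T u) :=
        (hT u).quasiMeasurePreserving.ae_eq_comp h1
      exact h3.trans h4
    show (∫ x, g x * g (x + u) ∂volume) = _
    refine integral_congr_ae ?_
    filter_upwards [h1, h2] with x hx1 hx2
    simp [hx1, hx2, RCLike.inner_apply, mul_comm]
  have hφcont : Continuous φ := by
    have hc : Continuous fun u => (inner ℝ (G : Lp ℝ 2 (volume : Measure (Fin q → ℝ))) (Φ u) : ℝ) :=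
      Continuous.inner continuous_const hΦcont
    exact (funext hφu : φ = _) ▸ hc
  have hφ0 : φ 0 = ∫ x, g x ^ 2 ∂volume := by
    rw [hφdef]
    simp only [add_zero]
    refine integral_congr_ae (Filter.Eventually.of_forall fun x => ?_)
    ring
  -- RHS identification
  have hRHS : ∫ x, μ x ^ 2 * f x ∂F = φ 0 := by
    rw [conv' (fun x => μ x ^ 2 * f x), hφ0]
    refine integral_congr_ae ?_
    filter_upwards [E0] with x hx
    have : f x * (μ x ^ 2 * f x) = (f x * μ x) ^ 2 := by ring
    rw [this, hx]
  -- product integrability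
  have hKfull : Integrable (fun p : (Fin q → ℝ) × (Fin q → ℝ) => g p.1 * g (p.1 + p.2))
      ((volume : Measure (Fin q → ℝ)).prod volume) := by
    have h1 : Integrable (fun p : (Fin q → ℝ) × (Fin q → ℝ) => g p.1 * g p.2)
        ((volume : Measure (Fin q → ℝ)).prod volume) := hg_int.mul_prod hg_int
    have h2 := (measurePreserving_prod_add (volume : Measure (Fin q → ℝ)) volume).integrable_comp
      h1.aestronglyMeasurable
    exact h2.2 h1
  -- eventual equality of the two expressions
  have heq : ∀ᶠ h in 𝓝[>] (0:ℝ),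
      (∫ x, μ x * (∫ y in Metric.closedBall x h, μ y ∂F) ∂F) / h ^ q
      = (∫ u in Metric.closedBall (0 : Fin q → ℝ) h, φ u) / h ^ q := by
    filter_upwards [self_mem_nhdsWithin] with h hh
    congr 1
    set S : Set (Fin q → ℝ) := Metric.closedBall 0 h with hSdef
    have hSm : MeasurableSet S := measurableSet_closedBall
    -- inner integral
    have hinner : ∀ x, (∫ y in Metric.closedBall x h, μ y ∂F)
        = ∫ u in S, g (x + u) ∂volume := by
      intro x
      rw [conv _ measurableSet_closedBall μ]
      have : ∫ y in Metric.closedBall x h, f y * μ y ∂volume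
          = ∫ y in Metric.closedBall x h, g y ∂volume :=
        integral_congr_ae (ae_restrict_of_ae E0)
      rw [this, auxB]
    -- outer integral
    have houter : (∫ x, μ x * (∫ y in Metric.closedBall x h, μ y ∂F) ∂F)
        = ∫ x, g x * (∫ u in S, g (x + u) ∂volume) ∂volume := by
      rw [conv' (fun x => μ x * (∫ y in Metric.closedBall x h, μ y ∂F))]
      refine integral_congr_ae ?_
      filter_upwards [E0] with x hx
      rw [hinner x, show f x * (μ x * ∫ u in S, g (x + u) ∂volume)
        = (f x * μ x) * ∫ u in S, g (x + u) ∂volume from by ring, hx]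
    rw [houter]
    -- Fubini
    have hK : Integrable (fun p : (Fin q → ℝ) × (Fin q → ℝ) => g p.1 * g (p.1 + p.2))
        ((volume : Measure (Fin q → ℝ)).prod (volume.restrict S)) := by
      have hprod : (volume : Measure (Fin q → ℝ)).prod (volume.restrict S)
          = ((volume : Measure (Fin q → ℝ)).prod volume).restrict (Set.univ ×ˢ S) := by
        rw [← Measure.prod_restrict, Measure.restrict_univ]
      rw [hprod]
      exact hKfull.restrict
    have hswap := MeasureTheory.integral_integral_swap
      (f := fun x u => g x * g (x + u))
      (μ := (volume : Measure (Fin q → ℝ))) (ν := volume.restrict S) hK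
    have hpull : ∀ x : Fin q → ℝ, g x * (∫ u in S, g (x + u) ∂volume)
        = ∫ u in S, g x * g (x + u) ∂volume := by
      intro x
      rw [integral_const_mul]
    calc ∫ x, g x * (∫ u in S, g (x + u) ∂volume) ∂volume
        = ∫ x, ∫ u in S, g x * g (x + u) ∂volume ∂volume :=
          integral_congr_ae (Filter.Eventually.of_forall fun x => hpull x)
      _ = ∫ u in S, ∫ x, g x * g (x + u) ∂volume ∂volume := hswap
      _ = ∫ u in S, φ u ∂volume := rfl
  rw [hRHS]
  refine Tendsto.congr' ?_ (auxA q φ hφcont)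
  filter_upwards [heq] with h hh
  exact hh.symm
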